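/- Let n ≥ 1, let v ∈ ℝⁿ be a vector of velocity grid nodes, let ω ∈ ℝⁿ and w ∈ ℝⁿ be entrywise strictly positive vectors, and let N = span{𝟙, v, v²} ⊆ ℝⁿ, where 𝟙 is the all-ones vector and v² is the entrywise square of v. Equip ℝⁿ with the weighted inner product ⟨f,g⟩_w = Σ_j f_j g_j w_j ω_j and let P_N be the orthogonal projection onto N with respect to ⟨·,·⟩_w. Then for every f ∈ ℝⁿ, the vector g = w ⋆ P_N(f / w) (entrywise product and quotient) has the same discrete mass, momentum and kinetic energy density as f, i.e. Σ_j g_j ω_j = Σ_j f_j ω_j, Σ_j g_j v_j ω_j = Σ_j f_j v_j ω_j, and ½Σ_j g_j v_j² ω_j = ½Σ_j f_j v_j² ω_j. -/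

import Mathlib

open Finset

/-- The weighted orthogonal projection onto `N = span{𝟙, v, v²}` composed with
scaling by the weight `w` preserves the discrete mass, momentum and kinetic
energy density. -/
theorem lomac_projection_preserves_moments
    (n : ℕ) (hn : 1 ≤ n) (v ω w : Fin n → ℝ)
    (hω : ∀ j, 0 < ω j) (hw : ∀ j, 0 < w j)
    (P : (Fin n → ℝ) → (Fin n → ℝ))
    (hPmem : ∀ f : Fin n → ℝ,
      P f ∈ Submodule.span ℝ ({(fun _ => (1:ℝ)), v, (fun j => (v j) ^ 2)} : Set (Fin n → ℝ)))
    (hPorth : ∀ f g : Fin n → ℝ,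
      g ∈ Submodule.span ℝ ({(fun _ => (1:ℝ)), v, (fun j => (v j) ^ 2)} : Set (Fin n → ℝ)) →
      ∑ j, (f j - P f j) * g j * w j * ω j = 0)
    (f : Fin n → ℝ) :
    (∑ j, (w j * P (fun i => f i / w i) j) * ω j = ∑ j, f j * ω j) ∧
    (∑ j, (w j * P (fun i => f i / w i) j) * v j * ω j = ∑ j, f j * v j * ω j) ∧
    ((1/2) * ∑ j, (w j * P (fun i => f i / w i) j) * (v j) ^ 2 * ω j
        = (1/2) * ∑ j, f j * (v j) ^ 2 * ω j) := by
  have key : ∀ g : Fin n → ℝ,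
      g ∈ Submodule.span ℝ ({(fun _ => (1:ℝ)), v, (fun j => (v j) ^ 2)} : Set (Fin n → ℝ)) →
      ∑ j, (w j * P (fun i => f i / w i) j) * g j * ω j = ∑ j, f j * g j * ω j := by
    intro g hg
    have h := hPorth (fun i => f i / w i) g hg
    have : ∑ j, (f j / w j - P (fun i => f i / w i) j) * g j * w j * ω j
        = ∑ j, (f j * g j * ω j - (w j * P (fun i => f i / w i) j) * g j * ω j) := by
      apply Finset.sum_congr rfl
      intro j _
      have hwj : w j ≠ 0 := (hw j).ne'
      field_simp
    rw [this, Finset.sum_sub_distrib] at h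
    linarith
  refine ⟨?_, ?_, ?_⟩
  · have := key (fun _ => (1:ℝ)) (Submodule.subset_span (by simp))
    simpa using this
  · exact key v (Submodule.subset_span (by simp))
  · have := key (fun j => (v j) ^ 2) (Submodule.subset_span (by simp))
    rw [this]
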